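/- Let X be a uniformly locally finite discrete metric space. Suppose for every l ∈ ℕ, k ∈ {1,…,3l}, and x ∈ X we are given a finite nonempty set S(x,k,l) ⊆ X such that: (i) for each l there is S_l > 0 with S(x,k,l) ⊆ B(x,S_l) for all x,k; (ii) for all x,y ∈ X with integer distance d(x,y) ≤ l and all k ∈ {l+1,…,2l}: S(x,k−d(x,y),l) ⊆ S(x,k,l) ∩ S(y,k,l) and S(x,k,l) ∪ S(y,k,l) ⊆ S(x,k+d(x,y),l); (iii) there is p : ℕ → ℝ with |S(x,k,l)| ≤ p(l) for all x,k,l and lim_{n→∞} p(n)^{1/n} = 1. Then X has Property A: for all R,ε > 0 there exists ξ : X → ℓ¹(X) with ‖ξ(x)‖₁ = 1 for all x, ‖ξ(x)−ξ(y)‖₁ ≤ ε whenever d(x,y) ≤ R, and some S > 0 with supp(ξ(x)) ⊆ B(x,S) for all x. -/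

import Mathlib

lemma aux_sum_ind {X : Type*} [DecidableEq X] (A T : Finset X) (hA : A.Nonempty) (hAT : A ⊆ T) :
    ∑ z ∈ T, (if z ∈ A then ((A.card : ℝ))⁻¹ else 0) = 1 := by
  have h0 : (0:ℝ) < A.card := by exact_mod_cast Finset.card_pos.2 hA
  rw [Finset.sum_ite_mem, Finset.inter_eq_right.2 hAT, Finset.sum_const, nsmul_eq_mul,
    mul_inv_cancel₀ h0.ne']

lemma aux_sum_ind_sub {X : Type*} [DecidableEq X] (A B T : Finset X) (hA : A.Nonempty)
    (hAB : A ⊆ B) (hBT : B ⊆ T) :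
    ∑ z ∈ T, |(if z ∈ A then ((A.card : ℝ))⁻¹ else 0) - (if z ∈ B then ((B.card : ℝ))⁻¹ else 0)|
      = 2 - 2 * ((A.card : ℝ) / B.card) := by
  have h0 : (0:ℝ) < A.card := by exact_mod_cast Finset.card_pos.2 hA
  have h1 : (0:ℝ) < B.card := by exact_mod_cast Finset.card_pos.2 (hA.mono hAB)
  have hcle : (B.card:ℝ)⁻¹ ≤ (A.card:ℝ)⁻¹ := by
    apply inv_anti₀ h0
    exact_mod_cast Finset.card_le_card hAB
  have hpt : ∀ z ∈ T,
      |(if z ∈ A then ((A.card : ℝ))⁻¹ else 0) - (if z ∈ B then ((B.card : ℝ))⁻¹ else 0)|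
      = (if z ∈ A then ((A.card : ℝ))⁻¹ - 2*(B.card:ℝ)⁻¹ else 0)
        + (if z ∈ B then ((B.card : ℝ))⁻¹ else 0) := by
    intro z _
    by_cases hza : z ∈ A
    · have hzb : z ∈ B := hAB hza
      simp only [hza, hzb, if_true]
      rw [abs_of_nonneg (by linarith)]
      ring
    · by_cases hzb : z ∈ B
      · have hb0 : (0:ℝ) ≤ (B.card:ℝ)⁻¹ := by positivity
        simp only [hza, hzb, if_true, if_false]
        rw [abs_of_nonpos (by linarith)]
        ring
      · simp [hza, hzb]
  rw [Finset.sum_congr rfl hpt, Finset.sum_add_distrib, Finset.sum_ite_mem, Finset.sum_ite_mem,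
    Finset.inter_eq_right.2 (hAB.trans hBT), Finset.inter_eq_right.2 hBT,
    Finset.sum_const, Finset.sum_const, nsmul_eq_mul, nsmul_eq_mul]
  field_simp
  ring

lemma aux_frac_le_log {a b : ℝ} (ha : 0 < a) (hb : 0 < b) :
    1 - a / b ≤ Real.log b - Real.log a := by
  have h := Real.log_le_sub_one_of_pos (div_pos ha hb)
  rw [Real.log_div ha.ne' hb.ne'] at h
  linarith

lemma aux_tele (f : ℕ → ℝ) (m n : ℕ) :
    ∑ j ∈ Finset.range m, (f (j + n) - f j)
      = ∑ j ∈ Finset.range n, f (m + j) - ∑ j ∈ Finset.range n, f j := by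
  have h1 := Finset.sum_range_add f m n
  have h2 := Finset.sum_range_add f n m
  have h3 : ∑ j ∈ Finset.range m, f (j + n) = ∑ j ∈ Finset.range m, f (n + j) :=
    Finset.sum_congr rfl fun j _ => by rw [add_comm]
  have h4 : ∑ x ∈ Finset.range (m+n), f x = ∑ x ∈ Finset.range (n+m), f x := by rw [add_comm]
  rw [Finset.sum_sub_distrib, h3]
  linarith

theorem stmt13 {X : Type*} [MetricSpace X] [DecidableEq X]
    (hulf : ∀ r : ℝ, 0 < r → ∃ N : ℕ, ∀ x : X,
      (Metric.closedBall x r).Finite ∧ (Metric.closedBall x r).ncard ≤ N)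
    (d : X → X → ℕ) (hd : ∀ x y, (d x y : ℝ) = dist x y)
    (S : X → ℕ → ℕ → Finset X)
    (hSne : ∀ (x : X) (l k : ℕ), 1 ≤ k → k ≤ 3 * l → (S x k l).Nonempty)
    (hi : ∀ l : ℕ, ∃ Sl : ℝ, 0 < Sl ∧ ∀ (x : X) (k : ℕ), 1 ≤ k → k ≤ 3 * l →
      ∀ z ∈ S x k l, dist x z ≤ Sl)
    (hii : ∀ (x y : X) (l k : ℕ), d x y ≤ l → l + 1 ≤ k → k ≤ 2 * l →
      (S x (k - d x y) l ⊆ S x k l ∩ S y k l) ∧ (S x k l ∪ S y k l ⊆ S x (k + d x y) l))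
    (p : ℕ → ℝ)
    (hiii : (∀ (x : X) (k l : ℕ), ((S x k l).card : ℝ) ≤ p l) ∧
      Filter.Tendsto (fun n : ℕ => p n ^ ((n : ℝ)⁻¹)) Filter.atTop (nhds 1)) :
    ∀ R ε : ℝ, 0 < R → 0 < ε → ∃ ξ : X → X → ℝ, ∃ Sb : ℝ, 0 < Sb ∧
      (∀ x, ∑' y, |ξ x y| = 1) ∧
      (∀ x y, dist x y ≤ R → ∑' z, |ξ x z - ξ y z| ≤ ε) ∧
      (∀ x y, ξ x y ≠ 0 → dist x y ≤ Sb) := by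
  intro R ε hR hε
  rcases isEmpty_or_nonempty X with hX | hX
  · exact ⟨fun _ _ => 0, 1, one_pos, fun x => isEmptyElim x, fun x => isEmptyElim x,
      fun x => isEmptyElim x⟩
  obtain ⟨x₀⟩ := hX
  -- choice of m
  set m : ℕ := max 1 ⌈R⌉₊ with hm
  have hm1 : 1 ≤ m := le_max_left _ _
  have hmR : R ≤ (m : ℝ) :=
    le_trans (Nat.le_ceil R) (by exact_mod_cast le_max_right 1 ⌈R⌉₊)
  -- p ≥ 1
  have hp1 : ∀ n : ℕ, 1 ≤ n → (1:ℝ) ≤ p n := by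
    intro n hn
    refine le_trans ?_ (hiii.1 x₀ 1 n)
    exact_mod_cast Finset.card_pos.2 (hSne x₀ n 1 le_rfl (by omega))
  -- log p n / n → 0
  have hlog : Filter.Tendsto (fun n : ℕ => (n:ℝ)⁻¹ * Real.log (p n)) Filter.atTop (nhds 0) := by
    have h1 : Filter.Tendsto (fun n : ℕ => Real.log (p n ^ ((n:ℝ)⁻¹)))
        Filter.atTop (nhds 0) := by
      have := (Real.continuousAt_log one_ne_zero).tendsto.comp hiii.2
      simpa [Function.comp_def] using this
    refine h1.congr' ?_
    filter_upwards [Filter.eventually_ge_atTop 1] with n hn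
    rw [Real.log_rpow (lt_of_lt_of_le one_pos (hp1 n hn))]
  have hall : Filter.Tendsto
      (fun n : ℕ => 6*(m:ℝ)*((n:ℝ)⁻¹ * Real.log (p n)) + 2*(m:ℝ)*(n:ℝ)⁻¹)
      Filter.atTop (nhds 0) := by
    have t2 : Filter.Tendsto (fun n : ℕ => (n:ℝ)⁻¹) Filter.atTop (nhds 0) :=
      tendsto_inv_atTop_zero.comp tendsto_natCast_atTop_atTop
    simpa using (hlog.const_mul (6*(m:ℝ))).add (t2.const_mul (2*(m:ℝ)))
  obtain ⟨l, hlε, hlm⟩ :=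
    ((hall.eventually_lt_const hε).and (Filter.eventually_ge_atTop m)).exists
  have hl1 : 1 ≤ l := hm1.trans hlm
  have hl0 : (0:ℝ) < l := by exact_mod_cast hl1
  obtain ⟨Sl, hSl0, hSl⟩ := hi l
  set χ : X → ℕ → X → ℝ :=
    fun x k z => if z ∈ S x k l then ((S x k l).card : ℝ)⁻¹ else 0 with hχ
  set ξ : X → X → ℝ := fun x z => (l:ℝ)⁻¹ * ∑ j ∈ Finset.range l, χ x (l+1+j) z with hξ
  set U : X → Finset X := fun x => (Finset.range (3*l)).biUnion fun j => S x (1+j) l with hU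
  have hSU : ∀ (x : X) (k : ℕ), 1 ≤ k → k ≤ 3*l → S x k l ⊆ U x := by
    intro x k h1 h2 z hz
    exact Finset.mem_biUnion.2 ⟨k-1, Finset.mem_range.2 (by omega),
      by rwa [show 1+(k-1) = k from by omega]⟩
  have hξ0 : ∀ (x : X) (z : X), z ∉ U x → ξ x z = 0 := by
    intro x z hz
    have : ∀ j ∈ Finset.range l, χ x (l+1+j) z = 0 := by
      intro j hj
      rw [hχ]
      simp only
      rw [if_neg]
      intro hmem
      exact hz (hSU x (l+1+j) (by omega) (by have := Finset.mem_range.1 hj; omega) hmem)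
    rw [hξ]
    simp only
    rw [Finset.sum_congr rfl this, Finset.sum_const, smul_zero, mul_zero]
  have hχsum : ∀ (x : X) (k : ℕ) (T : Finset X), 1 ≤ k → k ≤ 3*l → S x k l ⊆ T →
      ∑ z ∈ T, χ x k z = 1 := by
    intro x k T h1 h2 hT
    exact aux_sum_ind _ _ (hSne x l k h1 h2) hT
  have hχnn : ∀ (x : X) (k : ℕ) (z : X), 0 ≤ χ x k z := by
    intro x k z
    simp only [hχ]
    split_ifs
    · positivity
    · exact le_refl 0
  have hpos : ∀ (w : X) (k : ℕ), 1 ≤ k → k ≤ 3*l → (0:ℝ) < ((S w k l).card : ℝ) := by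
    intro w k h1 h2
    exact_mod_cast Finset.card_pos.2 (hSne w l k h1 h2)
  have hone : ∀ (w : X) (k : ℕ), 1 ≤ k → k ≤ 3*l → (1:ℝ) ≤ ((S w k l).card : ℝ) := by
    intro w k h1 h2
    exact_mod_cast Finset.card_pos.2 (hSne w l k h1 h2)
  refine ⟨ξ, Sl, hSl0, ?_, ?_, ?_⟩
  · -- normalization
    intro x
    have h0 : ∀ z ∉ U x, |ξ x z| = 0 := fun z hz => by rw [hξ0 x z hz, abs_zero]
    rw [tsum_eq_sum h0]
    have habs : ∀ z ∈ U x, |ξ x z| = ξ x z := by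
      intro z _
      refine abs_of_nonneg ?_
      simp only [hξ]
      exact mul_nonneg (by positivity) (Finset.sum_nonneg fun j _ => hχnn x _ z)
    rw [Finset.sum_congr rfl habs]
    simp only [hξ]
    rw [← Finset.mul_sum, Finset.sum_comm]
    have hinner : ∀ j ∈ Finset.range l, ∑ z ∈ U x, χ x (l+1+j) z = 1 := by
      intro j hj
      have hjl := Finset.mem_range.1 hj
      exact hχsum x (l+1+j) (U x) (by omega) (by omega) (hSU x (l+1+j) (by omega) (by omega))
    rw [Finset.sum_congr rfl hinner, Finset.sum_const, Finset.card_range, nsmul_eq_mul,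
      mul_one, inv_mul_cancel₀ hl0.ne']
  · -- variation
    intro x y hxy
    have hnd : (d x y : ℝ) = dist x y := hd x y
    set n := d x y with hn
    have hnm : n ≤ m := by
      have : (n:ℝ) ≤ (m:ℝ) := by rw [hnd]; linarith
      exact_mod_cast this
    have hnl : n ≤ l := hnm.trans hlm
    have hdyx : d y x = n := by
      have : ((d y x : ℕ):ℝ) = ((n:ℕ):ℝ) := by rw [hd, hn, hd, dist_comm]
      exact_mod_cast this
    have key1 : ∀ j, j < l → S x (l+1+j) l ⊆ S x (l+1+(j+n)) l := by
      intro j hj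
      have h := (hii x y l (l+1+j) hnl (by omega) (by omega)).2
      rw [← hn] at h
      intro z hz
      have := h (Finset.mem_union_left _ hz)
      rwa [show l+1+j+n = l+1+(j+n) from by omega] at this
    have key2 : ∀ j, j < l → S y (l+1+j) l ⊆ S x (l+1+(j+n)) l := by
      intro j hj
      have h := (hii x y l (l+1+j) hnl (by omega) (by omega)).2
      rw [← hn] at h
      intro z hz
      have := h (Finset.mem_union_right _ hz)
      rwa [show l+1+j+n = l+1+(j+n) from by omega] at this
    have key3 : ∀ j, j + n < l → S x (l+1+(j+n)) l ⊆ S y (l+1+(j+2*n)) l := by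
      intro j hj
      have h := (hii y x l (l+1+(j+n)) (by rw [hdyx]; exact hnl) (by omega) (by omega)).2
      rw [hdyx] at h
      intro z hz
      have := h (Finset.mem_union_right _ hz)
      rwa [show l+1+(j+n)+n = l+1+(j+2*n) from by omega] at this
    set V : Finset X := U x ∪ U y with hV
    have hSV : ∀ (w : X) (k : ℕ), 1 ≤ k → k ≤ 3*l → (w = x ∨ w = y) → S w k l ⊆ V := by
      rintro w k h1 h2 (rfl | rfl)
      · exact (hSU w k h1 h2).trans Finset.subset_union_left
      · exact (hSU w k h1 h2).trans Finset.subset_union_right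
    have hstep : ∀ j ∈ Finset.range l,
        ∑ z ∈ V, |χ x (l+1+j) z - χ y (l+1+j) z| ≤
          2*(Real.log ((S x (l+1+(j+n)) l).card) - Real.log ((S x (l+1+j) l).card))
          + (if j + n < l
             then 2*(Real.log ((S y (l+1+(j+2*n)) l).card) - Real.log ((S y (l+1+j) l).card))
             else 2) := by
      intro j hj
      have hjl := Finset.mem_range.1 hj
      have htri : ∑ z ∈ V, |χ x (l+1+j) z - χ y (l+1+j) z| ≤
          (∑ z ∈ V, |χ x (l+1+j) z - χ x (l+1+(j+n)) z|)
          + ∑ z ∈ V, |χ x (l+1+(j+n)) z - χ y (l+1+j) z| := by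
        rw [← Finset.sum_add_distrib]
        exact Finset.sum_le_sum fun z _ => abs_sub_le _ _ _
      have h1 : ∑ z ∈ V, |χ x (l+1+j) z - χ x (l+1+(j+n)) z| ≤
          2*(Real.log ((S x (l+1+(j+n)) l).card) - Real.log ((S x (l+1+j) l).card)) := by
        have heq := aux_sum_ind_sub (S x (l+1+j) l) (S x (l+1+(j+n)) l) V
          (hSne x l (l+1+j) (by omega) (by omega)) (key1 j hjl)
          (hSV x (l+1+(j+n)) (by omega) (by omega) (Or.inl rfl))
        have hfl := aux_frac_le_log (hpos x (l+1+j) (by omega) (by omega))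
          (hpos x (l+1+(j+n)) (by omega) (by omega))
        simp only [hχ]
        rw [heq]
        linarith
      have h2 : ∑ z ∈ V, |χ x (l+1+(j+n)) z - χ y (l+1+j) z| ≤
          (if j + n < l
           then 2*(Real.log ((S y (l+1+(j+2*n)) l).card) - Real.log ((S y (l+1+j) l).card))
           else 2) := by
        by_cases hc : j + n < l
        · rw [if_pos hc]
          have heq := aux_sum_ind_sub (S y (l+1+j) l) (S x (l+1+(j+n)) l) V
            (hSne y l (l+1+j) (by omega) (by omega)) (key2 j hjl)
            (hSV x (l+1+(j+n)) (by omega) (by omega) (Or.inl rfl))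
          have hfl := aux_frac_le_log (hpos y (l+1+j) (by omega) (by omega))
            (hpos x (l+1+(j+n)) (by omega) (by omega))
          have hmono : Real.log ((S x (l+1+(j+n)) l).card) ≤
              Real.log ((S y (l+1+(j+2*n)) l).card) := by
            apply Real.log_le_log (hpos x (l+1+(j+n)) (by omega) (by omega))
            exact_mod_cast Finset.card_le_card (key3 j hc)
          have habs : ∑ z ∈ V, |χ x (l+1+(j+n)) z - χ y (l+1+j) z|
              = ∑ z ∈ V, |χ y (l+1+j) z - χ x (l+1+(j+n)) z| :=
            Finset.sum_congr rfl fun z _ => abs_sub_comm _ _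
          rw [habs]
          simp only [hχ]
          rw [heq]
          linarith
        · rw [if_neg hc]
          have hb : ∑ z ∈ V, |χ x (l+1+(j+n)) z - χ y (l+1+j) z| ≤
              (∑ z ∈ V, χ x (l+1+(j+n)) z) + ∑ z ∈ V, χ y (l+1+j) z := by
            rw [← Finset.sum_add_distrib]
            refine Finset.sum_le_sum fun z _ => ?_
            calc |χ x (l+1+(j+n)) z - χ y (l+1+j) z|
                ≤ |χ x (l+1+(j+n)) z| + |χ y (l+1+j) z| := abs_sub _ _
              _ = χ x (l+1+(j+n)) z + χ y (l+1+j) z := by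
                  rw [abs_of_nonneg (hχnn _ _ _), abs_of_nonneg (hχnn _ _ _)]
          have e1 : ∑ z ∈ V, χ x (l+1+(j+n)) z = 1 :=
            hχsum x _ V (by omega) (by omega) (hSV x _ (by omega) (by omega) (Or.inl rfl))
          have e2 : ∑ z ∈ V, χ y (l+1+j) z = 1 :=
            hχsum y _ V (by omega) (by omega) (hSV y _ (by omega) (by omega) (Or.inr rfl))
          rw [e1, e2] at hb
          linarith
      linarith
    -- assemble
    have h0 : ∀ z ∉ V, |ξ x z - ξ y z| = 0 := by
      intro z hz
      rw [hξ0 x z (fun h => hz (Finset.mem_union_left _ h)),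
        hξ0 y z (fun h => hz (Finset.mem_union_right _ h)), sub_zero, abs_zero]
    rw [tsum_eq_sum h0]
    have hmain : ∑ z ∈ V, |ξ x z - ξ y z| ≤
        (l:ℝ)⁻¹ * ∑ j ∈ Finset.range l, ∑ z ∈ V, |χ x (l+1+j) z - χ y (l+1+j) z| := by
      have hpt : ∀ z ∈ V, |ξ x z - ξ y z| ≤
          (l:ℝ)⁻¹ * ∑ j ∈ Finset.range l, |χ x (l+1+j) z - χ y (l+1+j) z| := by
        intro z _
        simp only [hξ]
        rw [← mul_sub, abs_mul, abs_of_nonneg (by positivity : (0:ℝ) ≤ (l:ℝ)⁻¹),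
          ← Finset.sum_sub_distrib]
        exact mul_le_mul_of_nonneg_left (Finset.abs_sum_le_sum_abs _ _) (by positivity)
      calc ∑ z ∈ V, |ξ x z - ξ y z|
          ≤ ∑ z ∈ V, ((l:ℝ)⁻¹ * ∑ j ∈ Finset.range l, |χ x (l+1+j) z - χ y (l+1+j) z|) :=
            Finset.sum_le_sum hpt
        _ = (l:ℝ)⁻¹ * ∑ z ∈ V, ∑ j ∈ Finset.range l, |χ x (l+1+j) z - χ y (l+1+j) z| := by
            rw [Finset.mul_sum]
        _ = (l:ℝ)⁻¹ * ∑ j ∈ Finset.range l, ∑ z ∈ V, |χ x (l+1+j) z - χ y (l+1+j) z| := by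
            rw [Finset.sum_comm]
    have hsum := Finset.sum_le_sum hstep
    -- telescoping bounds
    have hT1 : ∑ j ∈ Finset.range l,
        2*(Real.log ((S x (l+1+(j+n)) l).card) - Real.log ((S x (l+1+j) l).card))
        ≤ 2*((n:ℝ) * Real.log (p l)) := by
      rw [← Finset.mul_sum,
        aux_tele (fun j => Real.log ((S x (l+1+j) l).card)) l n]
      have hub : ∑ j ∈ Finset.range n, Real.log ((S x (l+1+(l+j)) l).card)
          ≤ (n:ℝ) * Real.log (p l) := by
        calc ∑ j ∈ Finset.range n, Real.log ((S x (l+1+(l+j)) l).card)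
            ≤ ∑ _j ∈ Finset.range n, Real.log (p l) := by
              refine Finset.sum_le_sum fun j hj => ?_
              have hjn := Finset.mem_range.1 hj
              exact Real.log_le_log (hpos x (l+1+(l+j)) (by omega) (by omega)) (hiii.1 x _ l)
          _ = (n:ℝ) * Real.log (p l) := by
              rw [Finset.sum_const, Finset.card_range, nsmul_eq_mul]
      have hlb : 0 ≤ ∑ j ∈ Finset.range n, Real.log ((S x (l+1+j) l).card) := by
        refine Finset.sum_nonneg fun j hj => Real.log_nonneg ?_
        have hjn := Finset.mem_range.1 hj
        exact hone x (l+1+j) (by omega) (by omega)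
      linarith
    have hT2 : ∑ j ∈ Finset.range l,
        (if j + n < l
         then 2*(Real.log ((S y (l+1+(j+2*n)) l).card) - Real.log ((S y (l+1+j) l).card))
         else 2)
        ≤ 2*(2*(n:ℝ) * Real.log (p l)) + 2*(n:ℝ) := by
      rw [Finset.range_eq_Ico,
        ← Finset.sum_Ico_consecutive _ (Nat.zero_le (l-n)) (Nat.sub_le l n)]
      have hA : ∑ j ∈ Finset.Ico 0 (l-n),
          (if j + n < l
           then 2*(Real.log ((S y (l+1+(j+2*n)) l).card) - Real.log ((S y (l+1+j) l).card))
           else 2)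
          = ∑ j ∈ Finset.range (l-n),
            2*(Real.log ((S y (l+1+(j+2*n)) l).card) - Real.log ((S y (l+1+j) l).card)) := by
        rw [← Finset.range_eq_Ico]
        refine Finset.sum_congr rfl fun j hj => ?_
        have := Finset.mem_range.1 hj
        exact if_pos (by omega)
      have hB : ∑ j ∈ Finset.Ico (l-n) l,
          (if j + n < l
           then 2*(Real.log ((S y (l+1+(j+2*n)) l).card) - Real.log ((S y (l+1+j) l).card))
           else 2)
          = (n:ℝ) * 2 := by
        have : ∀ j ∈ Finset.Ico (l-n) l,
            (if j + n < l
             then 2*(Real.log ((S y (l+1+(j+2*n)) l).card) - Real.log ((S y (l+1+j) l).card))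
             else 2) = (2:ℝ) := by
          intro j hj
          have := Finset.mem_Ico.1 hj
          exact if_neg (by omega)
        rw [Finset.sum_congr rfl this, Finset.sum_const, nsmul_eq_mul, Nat.card_Ico]
        congr 1
        have : l - (l - n) = n := by omega
        exact_mod_cast congrArg (Nat.cast : ℕ → ℝ) this
      have hApart : ∑ j ∈ Finset.range (l-n),
          2*(Real.log ((S y (l+1+(j+2*n)) l).card) - Real.log ((S y (l+1+j) l).card))
          ≤ 2*(2*(n:ℝ) * Real.log (p l)) := by
        rw [← Finset.mul_sum,
          aux_tele (fun j => Real.log ((S y (l+1+j) l).card)) (l-n) (2*n)]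
        have hub : ∑ j ∈ Finset.range (2*n), Real.log ((S y (l+1+(l-n+j)) l).card)
            ≤ 2*(n:ℝ) * Real.log (p l) := by
          calc ∑ j ∈ Finset.range (2*n), Real.log ((S y (l+1+(l-n+j)) l).card)
              ≤ ∑ _j ∈ Finset.range (2*n), Real.log (p l) := by
                refine Finset.sum_le_sum fun j hj => ?_
                have hjn := Finset.mem_range.1 hj
                exact Real.log_le_log (hpos y (l+1+(l-n+j)) (by omega) (by omega))
                  (hiii.1 y _ l)
            _ = 2*(n:ℝ) * Real.log (p l) := by
                rw [Finset.sum_const, Finset.card_range, nsmul_eq_mul]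
                push_cast
                ring
        have hlb : 0 ≤ ∑ j ∈ Finset.range (2*n), Real.log ((S y (l+1+j) l).card) := by
          refine Finset.sum_nonneg fun j hj => Real.log_nonneg ?_
          have hjn := Finset.mem_range.1 hj
          exact hone y (l+1+j) (by omega) (by omega)
        linarith
      rw [hA, hB]
      linarith
    -- final numeric estimate
    have hL0 : 0 ≤ Real.log (p l) := Real.log_nonneg (hp1 l hl1)
    have hnm' : (n:ℝ) ≤ (m:ℝ) := by exact_mod_cast hnm
    have hinv : (0:ℝ) ≤ (l:ℝ)⁻¹ := by positivity
    have hfin : (l:ℝ)⁻¹ * (2*((n:ℝ) * Real.log (p l))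
        + (2*(2*(n:ℝ) * Real.log (p l)) + 2*(n:ℝ)))
        ≤ 6*(m:ℝ)*((l:ℝ)⁻¹ * Real.log (p l)) + 2*(m:ℝ)*(l:ℝ)⁻¹ := by
      have e1 : (n:ℝ) * ((l:ℝ)⁻¹ * Real.log (p l)) ≤ (m:ℝ) * ((l:ℝ)⁻¹ * Real.log (p l)) :=
        mul_le_mul_of_nonneg_right hnm' (mul_nonneg hinv hL0)
      have e2 : (n:ℝ) * (l:ℝ)⁻¹ ≤ (m:ℝ) * (l:ℝ)⁻¹ :=
        mul_le_mul_of_nonneg_right hnm' hinv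
      nlinarith [e1, e2]
    have hchain : (l:ℝ)⁻¹ * ∑ j ∈ Finset.range l,
        ∑ z ∈ V, |χ x (l+1+j) z - χ y (l+1+j) z|
        ≤ (l:ℝ)⁻¹ * (2*((n:ℝ) * Real.log (p l))
            + (2*(2*(n:ℝ) * Real.log (p l)) + 2*(n:ℝ))) := by
      refine mul_le_mul_of_nonneg_left ?_ hinv
      calc ∑ j ∈ Finset.range l, ∑ z ∈ V, |χ x (l+1+j) z - χ y (l+1+j) z|
          ≤ ∑ j ∈ Finset.range l,
            (2*(Real.log ((S x (l+1+(j+n)) l).card) - Real.log ((S x (l+1+j) l).card))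
            + (if j + n < l
               then 2*(Real.log ((S y (l+1+(j+2*n)) l).card) - Real.log ((S y (l+1+j) l).card))
               else 2)) := hsum
        _ ≤ 2*((n:ℝ) * Real.log (p l)) + (2*(2*(n:ℝ) * Real.log (p l)) + 2*(n:ℝ)) := by
            rw [Finset.sum_add_distrib]
            exact add_le_add hT1 hT2
    linarith [hmain, hchain, hfin, hlε]
  · -- support
    intro x z hz
    have hzU : z ∈ U x := by
      by_contra h
      exact hz (hξ0 x z h)
    obtain ⟨j, hj, hmem⟩ := Finset.mem_biUnion.1 hzU
    have hjr := Finset.mem_range.1 hj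
    exact hSl x (1+j) (by omega) (by omega) z hmem
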